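/- Let K be a compact metric space, η a countable ordinal, and (K_α)_{α≤η} a decreasing family of closed subsets of K with K₀ = K, K_η = ∅, and K_γ = ⋂_{α<γ} K_α at limit ordinals γ, such that a bounded function F : K → ℝ is continuous on each difference K_α \ K_{α+1}. Then there exists an increasing sequence (Kₙ)ₙ∈ℕ of closed subsets of K with K = ⋃ₙ Kₙ and F|_{Kₙ} continuous for each n. -/

import Mathlib

open EMetric Set ENNReal

/-- Given a decreasing transfinite family `(K_α)_{α ≤ η}` (`η` countable)
of closed sets with `K₀ = K`, `K_η = ∅`, intersections at limits, and a bounded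
`F : K → ℝ` continuous on each `K_α \ K_{α+1}`, there exists an increasing sequence
`(Kₙ)` of closed sets with `K = ⋃ₙ Kₙ` and `F|_{Kₙ}` continuous for each `n`. -/
theorem stmt15 {K : Type*} [MetricSpace K] [CompactSpace K] (F : K → ℝ)
    (hbd : ∃ C : ℝ, ∀ k, |F k| ≤ C)
    (η : Ordinal.{0}) (hη : η.card ≤ Cardinal.aleph0)
    (Ks : Ordinal.{0} → Set K)
    (h0 : Ks 0 = Set.univ) (hend : Ks η = ∅)
    (hcl : ∀ α ≤ η, IsClosed (Ks α))
    (hdec : ∀ α β : Ordinal, α ≤ β → β ≤ η → Ks β ⊆ Ks α)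
    (hlim : ∀ γ ≤ η, Order.IsSuccLimit γ → Ks γ = ⋂ (α : Set.Iio γ), Ks α.1)
    (hcont : ∀ α < η, ContinuousOn F (Ks α \ Ks (α + 1))) :
    ∃ Kn : ℕ → Set K, (∀ n, IsClosed (Kn n)) ∧ (∀ n, Kn n ⊆ Kn (n + 1)) ∧
      (⋃ n, Kn n) = Set.univ ∧ ∀ n, ContinuousOn F (Kn n) := by
  clear hbd hη
  -- the sequence of thresholds
  set ε : ℕ → ℝ≥0∞ := fun n => ((n : ℝ≥0∞) + 1)⁻¹ with hεdef
  have hεpos : ∀ n, 0 < ε n := by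
    intro n
    exact ENNReal.inv_pos.2 (ENNReal.add_ne_top.mpr ⟨ENNReal.natCast_ne_top n, one_ne_top⟩)
  have hεanti : ∀ n, ε (n + 1) ≤ ε n := by
    intro n
    refine ENNReal.inv_le_inv.mpr ?_
    push_cast
    exact le_self_add
  have hεsmall : ∀ r : ℝ≥0∞, 0 < r → ∃ n, ε n ≤ r := by
    intro r hr
    obtain ⟨n, hn⟩ := ENNReal.exists_inv_nat_lt hr.ne'
    refine ⟨n, le_trans ?_ hn.le⟩
    refine ENNReal.inv_le_inv.mpr ?_
    exact le_add_right (le_refl _)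
  -- the pieces
  set A : ℕ → Ordinal.{0} → Set K :=
    fun n α => {k | k ∈ Ks α ∧ ε n ≤ infEdist k (Ks (α + 1))} with hAdef
  set Kn : ℕ → Set K := fun n => ⋃ α ∈ Iio η, A n α with hKndef
  have hAclosed : ∀ n α, α ≤ η → IsClosed (A n α) := by
    intro n α hα
    have : A n α = Ks α ∩ {k | ε n ≤ infEdist k (Ks (α + 1))} := rfl
    rw [this]
    exact (hcl α hα).inter (isClosed_le continuous_const continuous_infEdist)
  -- the canonical ordinal of a point
  have hcanon : ∀ k : K, ∃ β < η, k ∈ Ks β ∧ k ∉ Ks (β + 1) := by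
    intro k
    set S : Set Ordinal.{0} := {α | k ∉ Ks α} with hSdef
    have hSne : S.Nonempty := ⟨η, by simp [hSdef, hend]⟩
    set γ := Ordinal.lt_wf.min S hSne with hγdef
    have hγS : k ∉ Ks γ := Ordinal.lt_wf.min_mem S hSne
    have hmin : ∀ α < γ, k ∈ Ks α := by
      intro α hα
      by_contra h
      exact Ordinal.lt_wf.not_lt_min S h hα
    have hγη : γ ≤ η := by
      by_contra h
      exact Ordinal.lt_wf.not_lt_min S (by simp [hSdef, hend]) (not_le.1 h)
    rcases Ordinal.zero_or_succ_or_isSuccLimit γ with h | ⟨β, hβ⟩ | h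
    · exact absurd (h0 ▸ Set.mem_univ k) (h ▸ hγS)
    · have hβγ : β < γ := hβ ▸ Order.lt_succ β
      refine ⟨β, lt_of_lt_of_le hβγ hγη, hmin β hβγ, ?_⟩
      rwa [Ordinal.add_one_eq_succ, hβ]
    · exfalso
      apply hγS
      rw [hlim γ hγη h]
      exact Set.mem_iInter.2 fun α => hmin α.1 α.2
  -- the key localization claim
  have hkey : ∀ (n : ℕ) (k : K) (β : Ordinal.{0}), β < η → k ∈ Ks β →
      ∀ k' ∈ Kn n, edist k' k < min (infEdist k (Ks (β + 1))) (ε n) → k' ∈ A n β := by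
    intro n k β hβη hkβ k' hk' hd
    obtain ⟨α, hαη, hk'A⟩ := Set.mem_iUnion₂.1 hk'
    obtain ⟨hk'α, hk'd⟩ := hk'A
    rcases lt_trichotomy α β with h | h | h
    · exfalso
      have h1 : α + 1 ≤ β := Order.add_one_le_of_lt h
      have hkα1 : k ∈ Ks (α + 1) := hdec (α + 1) β h1 hβη.le hkβ
      have h2 : infEdist k' (Ks (α + 1)) ≤ edist k' k := infEdist_le_edist_of_mem hkα1
      exact absurd ((hk'd.trans h2).trans_lt (hd.trans_le (min_le_right _ _))) (lt_irrefl _)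
    · exact h ▸ ⟨hk'α, hk'd⟩
    · exfalso
      have h1 : β + 1 ≤ α := Order.add_one_le_of_lt h
      have hk'b : k' ∈ Ks (β + 1) := hdec (β + 1) α h1 hαη.le hk'α
      have h2 : infEdist k (Ks (β + 1)) ≤ edist k k' := infEdist_le_edist_of_mem hk'b
      rw [edist_comm] at h2
      exact absurd (h2.trans_lt (hd.trans_le (min_le_left _ _))) (lt_irrefl _)
  refine ⟨Kn, ?_, ?_, ?_, ?_⟩
  · -- closedness
    intro n
    rw [← closure_subset_iff_isClosed]
    intro k hk
    obtain ⟨β, hβη, hkβ, hkβ1⟩ := hcanon k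
    have hr : 0 < infEdist k (Ks (β + 1)) :=
      EMetric.infEdist_pos_iff_notMem_closure.2 (by
        rwa [(hcl (β + 1) (Order.add_one_le_of_lt hβη)).closure_eq])
    set δ := min (infEdist k (Ks (β + 1))) (ε n) with hδdef
    have hδpos : 0 < δ := lt_min hr (hεpos n)
    have hsub : Metric.eball k δ ∩ Kn n ⊆ A n β := by
      rintro x ⟨hx1, hx2⟩
      exact hkey n k β hβη hkβ x hx2 (EMetric.mem_ball.1 hx1)
    have hk2 : k ∈ closure (Metric.eball k δ ∩ Kn n) :=
      EMetric.isOpen_ball.inter_closure ⟨EMetric.mem_ball_self hδpos, hk⟩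
    have hk3 : k ∈ A n β :=
      (hAclosed n β hβη.le).closure_subset ((closure_mono hsub) hk2)
    exact Set.mem_biUnion hβη hk3
  · -- monotone
    intro n
    refine Set.iUnion₂_mono fun α hα => ?_
    intro x hx
    exact ⟨hx.1, (hεanti n).trans hx.2⟩
  · -- covers
    rw [Set.eq_univ_iff_forall]
    intro k
    obtain ⟨β, hβη, hkβ, hkβ1⟩ := hcanon k
    have hr : 0 < infEdist k (Ks (β + 1)) :=
      EMetric.infEdist_pos_iff_notMem_closure.2 (by
        rwa [(hcl (β + 1) (Order.add_one_le_of_lt hβη)).closure_eq])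
    obtain ⟨n, hn⟩ := hεsmall _ hr
    exact Set.mem_iUnion.2 ⟨n, Set.mem_biUnion hβη ⟨hkβ, hn⟩⟩
  · -- continuity
    intro n k hk
    obtain ⟨β, hβη, hkβ, hkβ1⟩ := hcanon k
    have hr : 0 < infEdist k (Ks (β + 1)) :=
      EMetric.infEdist_pos_iff_notMem_closure.2 (by
        rwa [(hcl (β + 1) (Order.add_one_le_of_lt hβη)).closure_eq])
    set δ := min (infEdist k (Ks (β + 1))) (ε n) with hδdef
    have hδpos : 0 < δ := lt_min hr (hεpos n)
    have hsub : Metric.eball k δ ∩ Kn n ⊆ Ks β \ Ks (β + 1) := by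
      rintro x ⟨hx1, hx2⟩
      have hxA : x ∈ A n β := hkey n k β hβη hkβ x hx2 (EMetric.mem_ball.1 hx1)
      refine ⟨hxA.1, fun hmem => ?_⟩
      have : infEdist x (Ks (β + 1)) = 0 := infEdist_zero_of_mem hmem
      exact absurd (this ▸ hxA.2) (by simpa using (hεpos n).ne')
    have hmem : Ks β \ Ks (β + 1) ∈ nhdsWithin k (Kn n) :=
      mem_nhdsWithin.2 ⟨Metric.eball k δ, EMetric.isOpen_ball,
        EMetric.mem_ball_self hδpos, hsub⟩
    exact ((hcont β hβη) k ⟨hkβ, hkβ1⟩).mono_of_mem_nhdsWithin hmem
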